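/- Let D₀ > 0, R > 0, μ₀ > 0, and let u : [0, ∞) → [0, ∞) be a differentiable function with u(0) < μ₀ R/(D₀ + μ₀), u(t) > 0 for all t, and satisfying the differential inequality (d/dt) u(t)² ≤ 2(−μ₀ + D₀ u(t)/(R − u(t))) u(t)² whenever u(t) < R. Then for all t ≥ 0: u(t) ≤ u(0) and u(t) ≤ u(0) exp(−(μ₀ − D₀ u(0)/(R − u(0))) t); in particular u(t) → 0 as t → ∞. -/
import Mathlib


open Filter Set Topology

theorem gronwall_decay_lemma (D₀ R μ₀ : ℝ) (hD : 0 < D₀) (hR : 0 < R) (hμ : 0 < μ₀)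
    (u : ℝ → ℝ) (hdiff : Differentiable ℝ u)
    (h0 : u 0 < μ₀ * R / (D₀ + μ₀))
    (hpos : ∀ t, 0 ≤ t → 0 < u t)
    (hineq : ∀ t, 0 ≤ t → u t < R →
      deriv (fun t => (u t) ^ 2) t ≤ 2 * (-μ₀ + D₀ * u t / (R - u t)) * (u t) ^ 2) :
    (∀ t, 0 ≤ t → u t ≤ u 0 ∧
        u t ≤ u 0 * Real.exp (-(μ₀ - D₀ * u 0 / (R - u 0)) * t)) ∧
      Tendsto u atTop (nhds 0) := by
  have hDμ : (0:ℝ) < D₀ + μ₀ := by linarith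
  have hu00 : 0 < u 0 := hpos 0 le_rfl
  have h0' : u 0 * (D₀ + μ₀) < μ₀ * R := (lt_div_iff₀ hDμ).mp h0
  have hu0R : u 0 < R := by nlinarith
  have hRu0 : 0 < R - u 0 := by linarith
  set c := μ₀ - D₀ * u 0 / (R - u 0) with hc_def
  have hc : 0 < c := by
    have : D₀ * u 0 / (R - u 0) < μ₀ := by
      rw [div_lt_iff₀ hRu0]; nlinarith
    simp only [hc_def]; linarith
  -- differentiability of v = u^2
  have hvdiff : ∀ x : ℝ, HasDerivAt (fun t => (u t) ^ 2)
      (deriv (fun t => (u t) ^ 2) x) x := fun x =>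
    (((hdiff x).pow 2).hasDerivAt)
  -- pointwise derivative bound whenever u x ≤ u 0
  have key : ∀ x, 0 ≤ x → u x ≤ u 0 →
      deriv (fun t => (u t) ^ 2) x ≤ (-2 * c) * (u x) ^ 2 := by
    intro x hx hux
    have hux0 : 0 < u x := hpos x hx
    have h1 := hineq x hx (lt_of_le_of_lt hux hu0R)
    have h2 : D₀ * u x / (R - u x) ≤ D₀ * u 0 / (R - u 0) :=
      div_le_div₀ (by positivity) (by nlinarith) hRu0 (by linarith)
    have h3 : 2 * (-μ₀ + D₀ * u x / (R - u x)) * (u x) ^ 2 ≤ (-2 * c) * (u x) ^ 2 := by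
      have := mul_le_mul_of_nonneg_right h2 (sq_nonneg (u x))
      simp only [hc_def]; nlinarith
    exact le_trans h1 h3
  -- eventual strict decrease of u^2 to the right when derivative is negative
  have evdec : ∀ x : ℝ, deriv (fun t => (u t) ^ 2) x < 0 →
      ∀ᶠ y in 𝓝[>] x, (u y) ^ 2 < (u x) ^ 2 := by
    intro x hd
    have hv := (hvdiff x).hasDerivWithinAt (s := Ioi x)
    have := hv.limsup_slope_le' (lt_irrefl x) hd
    filter_upwards [this, self_mem_nhdsWithin] with y hy hyx
    rw [slope_def_field, div_lt_iff₀ (sub_pos.2 (mem_Ioi.mp hyx))] at hy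
    simpa using hy
  -- Step 1: u t ≤ u 0 for all t ≥ 0
  have step1 : ∀ t, 0 ≤ t → u t ≤ u 0 := by
    intro b hb
    have hsub : Icc (0:ℝ) b ⊆ u ⁻¹' Iic (u 0) := by
      refine IsClosed.Icc_subset_of_forall_mem_nhdsWithin (a := (0:ℝ)) (b := b)
        (s := u ⁻¹' Iic (u 0)) ?_ ?_ ?_
      · have h1 : IsClosed (u ⁻¹' Iic (u 0)) := isClosed_Iic.preimage hdiff.continuous
        have h2 : IsClosed (Icc (0:ℝ) b) := isClosed_Icc
        exact IsClosed.inter h1 h2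
      · exact mem_preimage.mpr (mem_Iic.mpr le_rfl)
      · rintro x ⟨hxs, hx0, hxb⟩
        have hxs : u x ≤ u 0 := hxs
        rcases lt_or_eq_of_le hxs with h | h
        · refine mem_nhdsWithin_of_mem_nhds (Filter.mem_of_superset
            ((isOpen_lt hdiff.continuous continuous_const).mem_nhds h) ?_)
          intro y hy
          have : u y < u 0 := hy
          exact mem_preimage.mpr (mem_Iic.mpr this.le)
        · -- u x = u 0
          have hux0 : 0 < u x := hpos x hx0
          have hd : deriv (fun t => (u t) ^ 2) x < 0 := by
            have := key x hx0 (le_of_eq h)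
            nlinarith [mul_pos hc (pow_pos hux0 2)]
          have := evdec x hd
          filter_upwards [this, self_mem_nhdsWithin] with y hy hyx
          have hy0 : 0 < u y := hpos y (le_trans hx0 (le_of_lt (mem_Ioi.mp hyx)))
          rw [h] at hy
          show u y ≤ u 0
          nlinarith
    have : u b ≤ u 0 := hsub ⟨hb, le_rfl⟩
    exact this
  -- Step 2: Gronwall bound
  have step2 : ∀ t, 0 ≤ t → (u t) ^ 2 ≤ (u 0) ^ 2 * Real.exp ((-2 * c) * t) := by
    intro b hb
    have := le_gronwallBound_of_liminf_deriv_right_le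
      (f := fun t => (u t) ^ 2) (f' := deriv (fun t => (u t) ^ 2))
      (δ := (u 0) ^ 2) (K := -2 * c) (ε := 0) (a := 0) (b := b)
      ((hdiff.continuous.pow 2).continuousOn)
      (fun x hx r hr =>
        (((hvdiff x).hasDerivWithinAt (s := Ici x)).liminf_right_slope_le hr).mono
          (fun z hz => by rwa [slope_def_field, div_eq_inv_mul] at hz))
      le_rfl
      (fun x hx => by
        have := key x hx.1 (step1 x hx.1)
        simpa using this)
      b ⟨hb, le_rfl⟩
    rwa [gronwallBound_ε0, sub_zero] at this
  -- conclude
  have main : ∀ t, 0 ≤ t → u t ≤ u 0 * Real.exp (-c * t) := by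
    intro t ht
    have h2 := step2 t ht
    have hexp : (u 0) ^ 2 * Real.exp ((-2 * c) * t) = (u 0 * Real.exp (-c * t)) ^ 2 := by
      rw [mul_pow, ← Real.exp_nat_mul]
      ring_nf
    rw [hexp] at h2
    have hrhs : 0 ≤ u 0 * Real.exp (-c * t) := by positivity
    nlinarith [hpos t ht]
  refine ⟨fun t ht => ⟨step1 t ht, by simpa [hc_def, neg_mul] using main t ht⟩, ?_⟩
  have hg : Tendsto (fun t : ℝ => u 0 * Real.exp (-c * t)) atTop (nhds 0) := by
    have h1 : Tendsto (fun t : ℝ => c * t) atTop atTop :=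
      Tendsto.const_mul_atTop hc tendsto_id
    have h2 : Tendsto (fun t : ℝ => Real.exp (-(c * t))) atTop (nhds 0) :=
      Real.tendsto_exp_neg_atTop_nhds_zero.comp h1
    have := h2.const_mul (u 0)
    simpa [neg_mul] using this
  apply squeeze_zero' (Filter.eventually_atTop.mpr ⟨0, fun t ht => (hpos t ht).le⟩)
    (Filter.eventually_atTop.mpr ⟨0, fun t ht => main t ht⟩) hg
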